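/- Let S be an evenly intersticed double occurrence word, i.e., between the two occurrences of any symbol there is a word of even length. After performing any sequence of splitting operations on S, at every stage the following invariant holds: for any pair of already-split symbols P, P̄, the number of occurrences of unsplit symbols strictly between P and P̄ is even if and only if P and P̄ have opposite orientations. In particular, in the fully split word S*, every pair of split symbols has opposite orientations. -/

import Mathlib

/-- A letter is either an unsplit symbol (from `A`) or a split symbol (from `B`) carrying
an orientation bit (`true` = barred). -/
abbrev Letter (A B : Type) := A ⊕ (B × Bool)

/-- Toggle the orientation (bar) of a split symbol; unsplit symbols are unchanged. -/
def toggle {A B : Type} : Letter A B → Letter A B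
  | .inl a => .inl a
  | .inr (P, b) => .inr (P, !b)

/-- Splitting at an unsplit symbol `p`: replace `S = α p β p γ` by
`α P β⁻¹ P̄ γ`, where `β⁻¹` is `β` reversed with the orientations of previously split
symbols toggled, and `P` is a fresh split symbol (its two new occurrences carrying
opposite orientations). -/
def SplitStep {A B : Type} (S T : List (Letter A B)) : Prop :=
  ∃ (α β γ : List (Letter A B)) (p : A) (P : B),
    (∀ b : Bool, Sum.inr (P, b) ∉ S) ∧
    S = α ++ .inl p :: β ++ .inl p :: γ ∧
    T = α ++ .inr (P, false) :: (β.reverse.map toggle) ++ .inr (P, true) :: γ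

namespace Stmt6Aux
variable {A B : Type}

def bn : Letter A B → ℕ
  | .inl _ => 0
  | .inr (_, b) => b.toNat

def symOf : Letter A B → A ⊕ B
  | .inl a => .inl a
  | .inr (P, _) => .inr P

def cntL (l : List (Letter A B)) : ℕ := l.countP fun x => x.isLeft

def C (L : List (Letter A B)) (k : ℕ) : ℕ := cntL (L.take k)

def InvU (L : List (Letter A B)) : Prop :=
  ∀ i j x y, i < j → L[i]? = some x → L[j]? = some y → symOf x = symOf y →
    (C L i + bn x + C L j + bn y) % 2 = 1

@[simp] lemma isLeft_toggle (x : Letter A B) : (toggle x).isLeft = x.isLeft := by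
  rcases x with a | ⟨P, b⟩ <;> rfl

@[simp] lemma symOf_toggle (x : Letter A B) : symOf (toggle x) = symOf x := by
  rcases x with a | ⟨P, b⟩ <;> rfl

lemma cntL_append (u v : List (Letter A B)) : cntL (u ++ v) = cntL u + cntL v :=
  List.countP_append ..

lemma cntL_cons (x : Letter A B) (l : List (Letter A B)) :
    cntL (x :: l) = cntL l + (if x.isLeft then 1 else 0) := by
  simp [cntL, List.countP_cons]

lemma cntL_map_toggle (l : List (Letter A B)) : cntL (l.map toggle) = cntL l := by
  simp [cntL, List.countP_map, Function.comp_def]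

lemma cntL_reverse (l : List (Letter A B)) : cntL l.reverse = cntL l := by
  simp [cntL, List.countP_reverse]

lemma cntL_rev_take (l : List (Letter A B)) {s : ℕ} (h : s ≤ l.length) :
    cntL (l.reverse.take s) + cntL (l.take (l.length - s)) = cntL l := by
  rw [List.take_reverse, cntL_reverse, Nat.add_comm, ← cntL_append, List.take_append_drop]

lemma toggle_toggle (x : Letter A B) : toggle (toggle x) = x := by
  rcases x with a | ⟨P, b⟩
  · rfl
  · cases b <;> rfl

lemma key_bn (x : Letter A B) : (cntL [x] + bn (toggle x) + bn x) % 2 = 1 := by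
  rcases x with a | ⟨P, b⟩
  · simp [cntL, bn, toggle]
  · cases b <;> simp [cntL, bn, toggle]

lemma get_lt {τ : Type} (u v : List τ) {k : ℕ} (h : k < u.length) : (u ++ v)[k]? = u[k]? := by
  simp [List.getElem?_append, h]

lemma get_at {τ : Type} (u v : List τ) (x : τ) : (u ++ x :: v)[u.length]? = some x := by
  rw [List.getElem?_append_right (le_refl _)]; simp

lemma get_hi {τ : Type} (u v : List τ) (t : ℕ) : (u ++ v)[u.length + t]? = v[t]? := by
  rw [List.getElem?_append_right (by omega)]; congr 1; omega

/-- for the shape `(u ++ (x :: v)) ++ (y :: w)` -/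
lemma getq_lt {τ : Type} (u v w : List τ) (x y : τ) {k : ℕ} (h : k < u.length) :
    (u ++ x :: v ++ y :: w)[k]? = u[k]? := by
  rw [get_lt _ _ (by simp only [List.length_append, List.length_cons]; omega), get_lt _ _ h]

lemma getq_x {τ : Type} (u v w : List τ) (x y : τ) :
    (u ++ x :: v ++ y :: w)[u.length]? = some x := by
  rw [get_lt _ _ (by simp only [List.length_append, List.length_cons]; omega), get_at]

lemma getq_mid {τ : Type} (u v w : List τ) (x y : τ) {s : ℕ} (h : s < v.length) :
    (u ++ x :: v ++ y :: w)[u.length + 1 + s]? = v[s]? := by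
  rw [get_lt _ _ (by simp only [List.length_append, List.length_cons]; omega), show u.length + 1 + s = u.length + (1 + s) by omega,
    get_hi, show 1 + s = s + 1 by omega]
  simp

lemma getq_y {τ : Type} (u v w : List τ) (x y : τ) :
    (u ++ x :: v ++ y :: w)[u.length + 1 + v.length]? = some y := by
  rw [show u.length + 1 + v.length = (u ++ x :: v).length by simp only [List.length_append, List.length_cons]; omega, get_at]

lemma getq_hi {τ : Type} (u v w : List τ) (x y : τ) (t : ℕ) :
    (u ++ x :: v ++ y :: w)[u.length + v.length + 2 + t]? = w[t]? := by
  rw [show u.length + v.length + 2 + t = (u ++ x :: v).length + (1 + t) by simp only [List.length_append, List.length_cons]; omega,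
    get_hi, show 1 + t = t + 1 by omega]
  simp

lemma takeq_lo (u v w : List (Letter A B)) (x y : Letter A B) {k : ℕ} (h : k ≤ u.length) :
    (u ++ x :: v ++ y :: w).take k = u.take k := by
  rw [List.take_append_of_le_length (by simp only [List.length_append, List.length_cons]; omega), List.take_append_of_le_length h]

lemma takeq_mid (u v w : List (Letter A B)) (x y : Letter A B) {s : ℕ} (hs : s ≤ v.length) :
    (u ++ x :: v ++ y :: w).take (u.length + 1 + s) = u ++ x :: v.take s := by
  rw [List.take_append_of_le_length (by simp only [List.length_append, List.length_cons]; omega),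
    show u.length + 1 + s = u.length + (1 + s) by omega, List.take_length_add_append,
    show 1 + s = s + 1 by omega, List.take_succ_cons]

lemma takeq_hi (u v w : List (Letter A B)) (x y : Letter A B) (s : ℕ) :
    (u ++ x :: v ++ y :: w).take (u.length + v.length + 2 + s)
      = u ++ x :: v ++ y :: w.take s := by
  rw [show u.length + v.length + 2 + s = (u ++ x :: v).length + (1 + s) by simp only [List.length_append, List.length_cons]; omega,
    List.take_length_add_append, show 1 + s = s + 1 by omega, List.take_succ_cons]

lemma Cq_lo (u v w : List (Letter A B)) (x y : Letter A B) {k : ℕ} (h : k ≤ u.length) :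
    C (u ++ x :: v ++ y :: w) k = cntL (u.take k) := by
  rw [C, takeq_lo _ _ _ _ _ h]

lemma Cq_mid (u v w : List (Letter A B)) (x y : Letter A B) {s : ℕ} (hs : s ≤ v.length) :
    C (u ++ x :: v ++ y :: w) (u.length + 1 + s)
      = cntL u + (if x.isLeft then 1 else 0) + cntL (v.take s) := by
  rw [C, takeq_mid _ _ _ _ _ hs, cntL_append, cntL_cons]; omega

lemma Cq_hi (u v w : List (Letter A B)) (x y : Letter A B) (s : ℕ) :
    C (u ++ x :: v ++ y :: w) (u.length + v.length + 2 + s)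
      = cntL u + (if x.isLeft then 1 else 0) + cntL v + (if y.isLeft then 1 else 0)
        + cntL (w.take s) := by
  rw [C, takeq_hi, cntL_append, cntL_append, cntL_cons, cntL_cons]
  omega

lemma exists_dec {τ : Type} (L : List τ) {i j : ℕ} (hij : i < j) (hj : j < L.length) :
    ∃ u v w, L = u ++ L[i] :: v ++ L[j] :: w ∧ u.length = i ∧ v.length = j - i - 1 := by
  have h1 : L.drop i = L[i] :: L.drop (i+1) := List.drop_eq_getElem_cons (by omega)
  have h2 : L.drop j = L[j] :: L.drop (j+1) := List.drop_eq_getElem_cons hj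
  have h3 : L.drop (i+1) = (L.drop (i+1)).take (j - i - 1) ++ L.drop j := by
    conv_lhs => rw [← List.take_append_drop (j - i - 1) (L.drop (i+1))]
    rw [List.drop_drop, show i + 1 + (j - i - 1) = j by omega]
  refine ⟨L.take i, (L.drop (i+1)).take (j - i - 1), L.drop (j+1), ?_, by simp; omega,
    by simp; omega⟩
  conv_lhs => rw [← List.take_append_drop i L, h1, h3, h2]
  simp

lemma length_lt_of_get? {τ : Type} {L : List τ} {k : ℕ} {x : τ} (h : L[k]? = some x) :
    k < L.length := by
  by_contra hc
  rw [List.getElem?_eq_none (by omega)] at h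
  cases h

lemma mem_of_get? {τ : Type} {L : List τ} {k : ℕ} {x : τ} (h : L[k]? = some x) : x ∈ L := by
  rw [List.getElem?_eq_some_iff] at h
  obtain ⟨h1, rfl⟩ := h
  exact List.getElem_mem h1


lemma base (S0 : List A)
    (heven : ∀ (α β γ : List A) (a : A), S0 = α ++ a :: β ++ a :: γ → Even β.length) :
    InvU (B := B) (S0.map Sum.inl) := by
  intro i j x y hij hi hj hsym
  have hjlen : j < S0.length := by
    have := length_lt_of_get? hj; simpa using this
  have hilen : i < S0.length := by omega
  rw [List.getElem?_map, List.getElem?_eq_getElem hilen] at hi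
  rw [List.getElem?_map, List.getElem?_eq_getElem hjlen] at hj
  obtain ⟨u, v, w, hdec, hu, hv⟩ := exists_dec S0 hij hjlen
  have hx : x = Sum.inl S0[i] := by cases hi; rfl
  have hy : y = Sum.inl S0[j] := by cases hj; rfl
  have haa : S0[i] = S0[j] := by
    rw [hx, hy] at hsym; simpa [symOf] using hsym
  rw [haa] at hdec
  have hev := heven u v w S0[j] hdec
  have hC : ∀ k, k ≤ S0.length → C (B := B) (S0.map Sum.inl) k = k := by
    intro k hk
    rw [C, ← List.map_take, cntL, List.countP_map]
    simp [Function.comp_def, List.length_take]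
    omega
  rw [hC i (by omega), hC j (by omega), hx, hy]
  obtain ⟨c, hc⟩ := hev
  simp only [bn, Bool.toNat_false, Bool.toNat_true]
  omega

lemma step {S T : List (Letter A B)} (hst : SplitStep S T) (hS : InvU S) : InvU T := by
  obtain ⟨α, β, γ, p, P, hfresh, hSeq, hTeq⟩ := hst
  set a := α.length with ha
  set n := β.length with hn
  set m := β.reverse.map toggle with hm
  have hmlen : m.length = n := by simp [hm, hn]
  have hS' : ∀ i j x y, i ≠ j → S[i]? = some x → S[j]? = some y → symOf x = symOf y →
      (C S i + bn x + C S j + bn y) % 2 = 1 := by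
    intro i j x y hne hi hj hsym
    rcases Nat.lt_or_ge i j with h | h
    · exact hS i j x y h hi hj hsym
    · have := hS j i y x (by omega) hj hi hsym.symm; omega
  -- basic get facts
  have hgS_a : S[a]? = some (Sum.inl p) := by rw [hSeq]; exact getq_x _ _ _ _ _
  have hgS_b : S[a + 1 + n]? = some (Sum.inl p) := by rw [hSeq]; exact getq_y _ _ _ _ _
  have hgT_a : T[a]? = some (Sum.inr (P, false)) := by rw [hTeq]; exact getq_x _ _ _ _ _
  have hgT_b : T[a + 1 + n]? = some (Sum.inr (P, true)) := by
    rw [hTeq, show a + 1 + n = α.length + 1 + m.length by omega]; exact getq_y _ _ _ _ _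
  have hgS_mid : ∀ s, s < n → S[a + 1 + s]? = β[s]? := by
    intro s hs; rw [hSeq]; exact getq_mid _ _ _ _ _ (by omega)
  have hgT_mid : ∀ s, s < n → T[a + 1 + s]? = m[s]? := by
    intro s hs; rw [hTeq]; exact getq_mid _ _ _ _ _ (by omega)
  have hmget : ∀ s, s < n → m[s]? = (β[n - 1 - s]?).map toggle := by
    intro s hs
    rw [hm, List.getElem?_map, List.getElem?_reverse (by omega)]
  have hg_lo : ∀ k, k < a → T[k]? = S[k]? := by
    intro k hk
    rw [hSeq, hTeq, getq_lt _ _ _ _ _ hk, getq_lt _ _ _ _ _ hk]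
  have hg_hi : ∀ t, T[a + n + 2 + t]? = S[a + n + 2 + t]? := by
    intro t
    rw [hSeq, hTeq, show a + n + 2 + t = α.length + m.length + 2 + t by omega, getq_hi,
      show α.length + m.length + 2 + t = α.length + β.length + 2 + t by omega, getq_hi]
  -- C facts
  have hC_lo : ∀ k, k ≤ a → C T k = C S k := by
    intro k hk
    rw [hSeq, hTeq, Cq_lo _ _ _ _ _ hk, Cq_lo _ _ _ _ _ hk]
  have hCS_mid : ∀ s, s ≤ n → C S (a + 1 + s) = cntL α + 1 + cntL (β.take s) := by
    intro s hs
    rw [hSeq, Cq_mid _ _ _ _ _ (by omega)]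
    simp
  have hCT_mid : ∀ s, s ≤ n → C T (a + 1 + s) = cntL α + cntL (m.take s) := by
    intro s hs
    rw [hTeq, Cq_mid _ _ _ _ _ (by omega)]
    simp
  have hCS_hi : ∀ s, C S (a + n + 2 + s) = cntL α + 1 + cntL β + 1 + cntL (γ.take s) := by
    intro s
    rw [hSeq, show a + n + 2 + s = α.length + β.length + 2 + s by omega, Cq_hi]
    simp
  have hCT_hi : ∀ s, C T (a + n + 2 + s) = cntL α + cntL β + cntL (γ.take s) := by
    intro s
    rw [hTeq, show a + n + 2 + s = α.length + m.length + 2 + s by omega, Cq_hi]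
    have h4 : cntL m = cntL β := by rw [hm, cntL_map_toggle, cntL_reverse]
    simp [h4]
  have hmtake : ∀ s, s ≤ n → cntL (m.take s) + cntL (β.take (n - s)) = cntL β := by
    intro s hs
    rw [hm, ← List.map_take, cntL_map_toggle]
    have h0 := cntL_rev_take β (show s ≤ β.length by omega)
    rw [show β.length - s = n - s by omega] at h0
    exact h0
  -- parity of β
  have hbeta : cntL β % 2 = 0 := by
    have h1 := hS a (a + 1 + n) _ _ (by omega) hgS_a hgS_b rfl
    have h2 : C S a = cntL α := by
      have := hC_lo  -- dummy
      rw [hSeq, Cq_lo _ _ _ _ _ (le_refl _), List.take_length]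
    have h3 := hCS_mid n (le_refl _)
    rw [List.take_length] at h3
    simp only [bn, Bool.toNat_false, Bool.toNat_true] at h1
    omega
  -- freshness of P in positions
  have hfreshT : ∀ k (b : Bool), T[k]? = some (Sum.inr (P, b)) → k = a ∨ k = a + 1 + n := by
    intro k b hk
    by_contra hcon
    push_neg at hcon
    have hklen : k < T.length := length_lt_of_get? hk
    have hTlen : T.length = a + n + 2 + γ.length := by
      rw [hTeq]; simp [hmlen]
      omega
    rcases Nat.lt_trichotomy k a with h | h | h
    · rw [hg_lo k h] at hk
      exact hfresh b (mem_of_get? hk)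
    · exact absurd h hcon.1
    · rcases Nat.lt_or_ge k (a + 1 + n) with h2 | h2
      · have hs : k - a - 1 < n := by omega
        have hgm := hgT_mid (k - a - 1) hs
        rw [show a + 1 + (k - a - 1) = k by omega] at hgm
        rw [hgm, hmget _ hs] at hk
        rcases hb : β[n - 1 - (k - a - 1)]? with _ | z
        · rw [hb] at hk; cases hk
        · rw [hb] at hk
          simp at hk
          have hz : z = Sum.inr (P, !b) := by
            rw [← toggle_toggle z, hk]; rfl
          have hmem : z ∈ S := by
            rw [hSeq]
            have : z ∈ β := mem_of_get? hb
            simp [this]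
          rw [hz] at hmem
          exact hfresh (!b) hmem
      · have h3 : a + 1 + n < k := by omega
        have hh := hg_hi (k - (a + n + 2))
        rw [show a + n + 2 + (k - (a + n + 2)) = k by omega] at hh
        rw [hh] at hk
        exact hfresh b (mem_of_get? hk)
  -- main goal
  intro i j x y hij hi hj hsym
  have hjlen : j < T.length := length_lt_of_get? hj
  by_cases hP : i = a ∨ i = a + 1 + n ∨ j = a ∨ j = a + 1 + n
  · -- the new pair
    have hxy : symOf x = Sum.inr P ∧ symOf y = Sum.inr P := by
      rcases hP with h | h | h | h
      · subst h; rw [hgT_a] at hi; cases hi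
        exact ⟨rfl, by rw [← hsym]; rfl⟩
      · subst h; rw [hgT_b] at hi; cases hi
        exact ⟨rfl, by rw [← hsym]; rfl⟩
      · subst h; rw [hgT_a] at hj; cases hj
        exact ⟨by rw [hsym]; rfl, rfl⟩
      · subst h; rw [hgT_b] at hj; cases hj
        exact ⟨by rw [hsym]; rfl, rfl⟩
    obtain ⟨bx, hbx⟩ : ∃ b, x = Sum.inr (P, b) := by
      rcases x with a' | ⟨Q, c⟩
      · exact absurd hxy.1 (by simp [symOf])
      · have : Q = P := by simpa [symOf] using hxy.1
        exact ⟨c, by rw [this]⟩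
    obtain ⟨by', hby⟩ : ∃ b, y = Sum.inr (P, b) := by
      rcases y with a' | ⟨Q, c⟩
      · exact absurd hxy.2 (by simp [symOf])
      · have : Q = P := by simpa [symOf] using hxy.2
        exact ⟨c, by rw [this]⟩
    have hiP := hfreshT i bx (hbx ▸ hi)
    have hjP := hfreshT j by' (hby ▸ hj)
    have hia : i = a := by omega
    have hjb : j = a + 1 + n := by omega
    subst hia hjb
    rw [hgT_a] at hi
    rw [hgT_b] at hj
    cases hi; cases hj
    have h2 : C T a = cntL α := by
      rw [hTeq, Cq_lo _ _ _ _ _ (le_refl _), List.take_length]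
    have h3 := hCT_mid n (le_refl _)
    rw [show m.take n = m by rw [← hmlen]; exact List.take_length] at h3
    have h4 : cntL m = cntL β := by rw [hm, cntL_map_toggle, cntL_reverse]
    simp only [bn, Bool.toNat_false, Bool.toNat_true]
    omega
  · push_neg at hP
    obtain ⟨hia, hib, hja, hjb⟩ := hP
    have KEY : ∀ k z', k < T.length → k ≠ a → k ≠ a + 1 + n → T[k]? = some z' →
        ∃ k' z, S[k']? = some z ∧ symOf z = symOf z' ∧
          (C T k + bn z') % 2 = (C S k' + bn z) % 2 ∧
          ((k < a ∧ k' = k) ∨ (a < k ∧ k < a + 1 + n ∧ k' = 2*a + n + 1 - k) ∨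
            (a + 1 + n < k ∧ k' = k)) := by
      intro k z' hklen hka hkb hk
      rcases Nat.lt_trichotomy k a with h | h | h
      · refine ⟨k, z', ?_, rfl, ?_, Or.inl ⟨h, rfl⟩⟩
        · rw [← hg_lo k h]; exact hk
        · rw [hC_lo k (by omega)]
      · exact absurd h hka
      · rcases Nat.lt_or_ge k (a + 1 + n) with h2 | h2
        · -- interior
          have hsn : k - a - 1 < n := by omega
          have hk' : a + 1 + (k - a - 1) = k := by omega
          have hgm := hgT_mid (k - a - 1) hsn
          rw [hk', hk, hmget _ hsn] at hgm
          rcases hb : β[n - 1 - (k - a - 1)]? with _ | z₀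
          · rw [hb] at hgm; cases hgm
          · rw [hb] at hgm
            simp at hgm
            have hz' : z' = toggle z₀ := hgm
            refine ⟨a + 1 + (n - 1 - (k - a - 1)), z₀, ?_, ?_, ?_,
              Or.inr (Or.inl ⟨h, h2, by omega⟩)⟩
            · rw [hgS_mid _ (by omega)]; exact hb
            · rw [hz', symOf_toggle]
            · have e1 : C T k = cntL α + cntL (m.take (k - a - 1)) := by
                have e0 := hCT_mid (k - a - 1) (by omega)
                rw [hk'] at e0
                exact e0
              have e2 : C S (a + 1 + (n - 1 - (k - a - 1)))
                  = cntL α + 1 + cntL (β.take (n - 1 - (k - a - 1))) := hCS_mid _ (by omega)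
              have e3 := hmtake (k - a - 1) (by omega)
              have e4 : cntL (β.take (n - (k - a - 1)))
                  = cntL (β.take (n - 1 - (k - a - 1))) + cntL [z₀] := by
                rw [show n - (k - a - 1) = (n - 1 - (k - a - 1)) + 1 by omega, List.take_succ,
                  hb, cntL_append]
                rfl
              have e5 := key_bn z₀
              rw [hz']
              omega
        · have h3 : a + 1 + n < k := by omega
          have hk' : a + n + 2 + (k - (a + n + 2)) = k := by omega
          refine ⟨k, z', ?_, rfl, ?_, Or.inr (Or.inr ⟨h3, rfl⟩)⟩
          · rw [← hk', ← hg_hi, hk']; exact hk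
          · have e1 := hCS_hi (k - (a + n + 2))
            have e2 := hCT_hi (k - (a + n + 2))
            rw [← hk']
            omega
    obtain ⟨i', zi, hSi, hsymi, hpari, hregi⟩ := KEY i x (by omega) hia hib hi
    obtain ⟨j', zj, hSj, hsymj, hparj, hregj⟩ := KEY j y hjlen hja hjb hj
    have hne : i' ≠ j' := by
      rcases hregi with ⟨h1, h2⟩ | ⟨h1, h2, h3⟩ | ⟨h1, h2⟩ <;>
        rcases hregj with ⟨g1, g2⟩ | ⟨g1, g2, g3⟩ | ⟨g1, g2⟩ <;> omega
    have := hS' i' j' zi zj hne hSi hSj (by rw [hsymi, hsym, ← hsymj])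
    omega

end Stmt6Aux

/-- For an evenly intersticed double occurrence word, after any sequence of splitting
operations the invariant holds: for each pair of already-split symbols, the number of
occurrences of unsplit symbols strictly between them is even iff the pair has opposite
orientations.  In particular, in a fully split word every split pair has opposite
orientations. -/
theorem stmt6 {A B : Type} [DecidableEq A] (S0 : List A)
    (hdouble : ∀ a ∈ S0, S0.count a = 2)
    (heven : ∀ (α β γ : List A) (a : A), S0 = α ++ a :: β ++ a :: γ → Even β.length)
    (T : List (Letter A B))
    (hT : Relation.ReflTransGen SplitStep (S0.map Sum.inl) T) :
    (∀ (α β γ : List (Letter A B)) (P : B) (b₁ b₂ : Bool),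
      T = α ++ .inr (P, b₁) :: β ++ .inr (P, b₂) :: γ →
      (Even (β.countP fun l => l.isLeft) ↔ b₁ ≠ b₂)) ∧
    ((∀ l ∈ T, l.isRight = true) →
      ∀ (α β γ : List (Letter A B)) (P : B) (b₁ b₂ : Bool),
        T = α ++ .inr (P, b₁) :: β ++ .inr (P, b₂) :: γ → b₁ ≠ b₂) := by

  have hInv : Stmt6Aux.InvU T := by
    induction hT with
    | refl => exact Stmt6Aux.base S0 heven
    | tail _ hstep ih => exact Stmt6Aux.step hstep ih
  have hpart1 : ∀ (α β γ : List (Letter A B)) (P : B) (b₁ b₂ : Bool),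
      T = α ++ .inr (P, b₁) :: β ++ .inr (P, b₂) :: γ →
      (Even (β.countP fun l => l.isLeft) ↔ b₁ ≠ b₂) := by
    intro α' β' γ' P b₁ b₂ hdec
    have hi : T[α'.length]? = some (Sum.inr (P, b₁)) := by
      rw [hdec]; exact Stmt6Aux.getq_x _ _ _ _ _
    have hj : T[α'.length + 1 + β'.length]? = some (Sum.inr (P, b₂)) := by
      rw [hdec]; exact Stmt6Aux.getq_y _ _ _ _ _
    have h := hInv α'.length (α'.length + 1 + β'.length) _ _ (by omega) hi hj rfl
    have hCi : Stmt6Aux.C T α'.length = Stmt6Aux.cntL α' := by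
      rw [hdec, Stmt6Aux.Cq_lo _ _ _ _ _ (le_refl _), List.take_length]
    have hCj : Stmt6Aux.C T (α'.length + 1 + β'.length)
        = Stmt6Aux.cntL α' + Stmt6Aux.cntL β' := by
      rw [hdec, Stmt6Aux.Cq_mid _ _ _ _ _ (le_refl _), List.take_length]
      simp
    rw [hCi, hCj] at h
    simp only [Stmt6Aux.bn] at h
    have hrfl : (β'.countP fun l => l.isLeft) = Stmt6Aux.cntL β' := rfl
    rw [hrfl, Nat.even_iff]
    cases b₁ <;> cases b₂ <;> simp at h ⊢ <;> omega
  refine ⟨hpart1, ?_⟩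
  intro hall α' β' γ' P b₁ b₂ hdec
  have hz : (β'.countP fun l => l.isLeft) = 0 := by
    rw [List.countP_eq_zero]
    intro l hl
    have hmem : l ∈ T := by rw [hdec]; simp [hl]
    have hr := hall l hmem
    rcases l with a | q
    · simp at hr
    · simp
  exact (hpart1 α' β' γ' P b₁ b₂ hdec).mp (by rw [hz]; exact Even.zero)
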